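/- Assume the algebraic conditions of Assumption 5.1 (see context). Then: (i) for every γ ∈ H and t ∈ T_{p_s(γ)}, ρ_{γ◀t} = ρ_γ (in particular p_r(γ◀t) = p_r(γ)); (ii) for γ ∈ H and a group homomorphism χ : T_{p_s(γ)} → 𝕋, setting γ⋄χ := χ∘ρ_γ (an element of Hom(T_{p_r(γ)}, 𝕋)) defines an action of H on the bundle T̂ = ⊔_{x∈X} Hom(T_x, 𝕋): (γη)⋄χ = γ⋄(η⋄χ) for composable γ, η, and u⋄χ = χ for units u; (iii) (γ◀t)⋄χ = γ⋄χ, so ⋄ descends to an action of the quotient groupoid H/T on T̂, written [γ]⋄χ; (iv) [γ]⋄(χ₁·χ₂) = ([γ]⋄χ₁)·([γ]⋄χ₂), where characters on a common fibre are multiplied pointwise. -/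
import Mathlib


universe u v w

/-- A groupoid, presented by its set `H` of arrows and its set `U` of units: range and source
maps `r, s : H → U`, a (totalized) partially-defined multiplication which is only meaningful on
composable pairs (`s g = r h`), inversion, and the embedding `unit : U → H` of units. -/
structure RawGroupoid (H : Type u) (U : Type v) where
  r : H → U
  s : H → U
  mul : H → H → H
  inv : H → H
  unit : U → H
  r_unit : ∀ x, r (unit x) = x
  s_unit : ∀ x, s (unit x) = x
  r_mul : ∀ g h, s g = r h → r (mul g h) = r g
  s_mul : ∀ g h, s g = r h → s (mul g h) = s h
  r_inv : ∀ g, r (inv g) = s g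
  s_inv : ∀ g, s (inv g) = r g
  inv_inv : ∀ g, inv (inv g) = g
  mul_assoc : ∀ g h k, s g = r h → s h = r k → mul (mul g h) k = mul g (mul h k)
  unit_mul : ∀ g, mul (unit (r g)) g = g
  mul_unit : ∀ g, mul g (unit (s g)) = g
  inv_mul : ∀ g, mul (inv g) g = unit (s g)
  mul_inv : ∀ g, mul g (inv g) = unit (r g)

/-- A bundle of abelian groups: a surjection `p : T → X` together with a fibrewise abelian
group structure (the multiplication is totalized; it is only meaningful within a fibre). -/
structure AbGroupBundle (T : Type u) (X : Type v) where
  p : T → X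
  p_surj : Function.Surjective p
  e : X → T
  bmul : T → T → T
  binv : T → T
  p_e : ∀ x, p (e x) = x
  p_bmul : ∀ s t, p s = p t → p (bmul s t) = p t
  p_binv : ∀ t, p (binv t) = p t
  bmul_assoc : ∀ s t u, p s = p t → p t = p u → bmul (bmul s t) u = bmul s (bmul t u)
  bmul_comm : ∀ s t, p s = p t → bmul s t = bmul t s
  e_bmul : ∀ t, bmul (e (p t)) t = t
  binv_bmul : ∀ t, bmul (binv t) t = e (p t)

/-- The algebraic conditions of Assumption 5.1: a groupoid `H` whose unit space `U = H⁰` is a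
bundle of abelian groups `p : U → X`, together with commuting free left and right actions
`▶ = actL` and `◀ = actR` of `U` on `H` along the moment maps `p∘r` and `p∘s` respectively, and
maps `λ = lam` and `ρ = rho` intertwining them, satisfying conditions (1a), (1b) and
(2a)–(2f). -/
structure Assumption51 (H : Type u) (U : Type v) (X : Type w) where
  gpd : RawGroupoid H U
  bund : AbGroupBundle U X
  actL : U → H → H
  actR : H → U → H
  lam : H → U → U
  rho : H → U → U
  -- `actL` is a left action of `T = U` on `H` along `p ∘ r`
  actL_id : ∀ γ, actL (bund.e (bund.p (gpd.r γ))) γ = γ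
  actL_mul : ∀ t t' γ, bund.p t = bund.p t' → bund.p t' = bund.p (gpd.r γ) →
    actL (bund.bmul t t') γ = actL t (actL t' γ)
  pr_actL : ∀ t γ, bund.p t = bund.p (gpd.r γ) → bund.p (gpd.r (actL t γ)) = bund.p t
  actL_free : ∀ t γ, bund.p t = bund.p (gpd.r γ) → actL t γ = γ →
    t = bund.e (bund.p (gpd.r γ))
  -- `actR` is a right action of `T = U` on `H` along `p ∘ s`
  actR_id : ∀ γ, actR γ (bund.e (bund.p (gpd.s γ))) = γ
  actR_mul : ∀ γ t t', bund.p t = bund.p (gpd.s γ) → bund.p t' = bund.p t →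
    actR γ (bund.bmul t t') = actR (actR γ t) t'
  ps_actR : ∀ γ t, bund.p t = bund.p (gpd.s γ) → bund.p (gpd.s (actR γ t)) = bund.p t
  actR_free : ∀ γ t, bund.p t = bund.p (gpd.s γ) → actR γ t = γ →
    t = bund.e (bund.p (gpd.s γ))
  -- the two actions commute
  act_comm : ∀ t γ t', bund.p t = bund.p (gpd.r γ) → bund.p t' = bund.p (gpd.s γ) →
    actR (actL t γ) t' = actL t (actR γ t')
  -- (1a): `t ▶ u = u ◀ t` for units `u`
  unit_act : ∀ u t, bund.p t = bund.p u → actL t (gpd.unit u) = actR (gpd.unit u) t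
  -- (1b): `r(t ▶ γ) = t ▶ r(γ)` and `s(η ◀ t) = s(η) ◀ t`
  r_actL : ∀ t γ, bund.p t = bund.p (gpd.r γ) →
    gpd.unit (gpd.r (actL t γ)) = actL t (gpd.unit (gpd.r γ))
  s_actR : ∀ γ t, bund.p t = bund.p (gpd.s γ) →
    gpd.unit (gpd.s (actR γ t)) = actR (gpd.unit (gpd.s γ)) t
  -- `λ_η : T_{p_s(η)} → T_{p_r(η)}` and `ρ_η : T_{p_r(η)} → T_{p_s(η)}`
  lam_p : ∀ η t, bund.p t = bund.p (gpd.s η) → bund.p (lam η t) = bund.p (gpd.r η)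
  rho_p : ∀ η t, bund.p t = bund.p (gpd.r η) → bund.p (rho η t) = bund.p (gpd.s η)
  -- (2a)–(2f)
  spec_a : ∀ η t, bund.p t = bund.p (gpd.s η) → actR η t = actL (lam η t) η
  spec_b : ∀ η t, bund.p t = bund.p (gpd.r η) → actL t η = actR η (rho η t)
  spec_c : ∀ γ η t, gpd.s γ = gpd.r η → bund.p t = bund.p (gpd.s η) →
    actR (gpd.mul γ η) t = gpd.mul (actR γ (lam η t)) (actR η t)
  spec_d : ∀ γ η t, gpd.s γ = gpd.r η → bund.p t = bund.p (gpd.r γ) →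
    actL t (gpd.mul γ η) = gpd.mul (actL t γ) (actL (rho γ t) η)
  spec_e : ∀ η t, bund.p t = bund.p (gpd.s η) → gpd.inv (actR η t) = actL t (gpd.inv η)
  spec_f : ∀ η t, bund.p t = bund.p (gpd.r η) → gpd.inv (actL t η) = actR (gpd.inv η) t

namespace Assumption51

variable {H : Type u} {U : Type v} {X : Type w} (A : Assumption51 H U X)

/-- The moment map `p ∘ r`. -/
def pr (γ : H) : X := A.bund.p (A.gpd.r γ)

/-- The moment map `p ∘ s`. -/
def ps (γ : H) : X := A.bund.p (A.gpd.s γ)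

/-- The orbit `[γ] = {γ ◀ t : t ∈ T_{p_s(γ)}}` of `γ` under the right `T`-action. -/
def orbit (γ : H) : Set H := {η | ∃ t : U, A.bund.p t = A.ps γ ∧ η = A.actR γ t}

/-- The orbit of `γ` under the left `T`-action. -/
def orbitL (γ : H) : Set H := {η | ∃ t : U, A.bund.p t = A.pr γ ∧ η = A.actL t γ}

/-- The product `[γ][η]` of two `T`-orbits: all products of composable representatives. -/
def classProd (γ η : H) : Set H :=
  {ξ | ∃ γ' ∈ A.orbit γ, ∃ η' ∈ A.orbit η, A.gpd.s γ' = A.gpd.r η' ∧ ξ = A.gpd.mul γ' η'}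

end Assumption51

namespace Assumption51

/-- The action `γ ⋄ χ := χ ∘ ρ_γ` of `H` on (functions representing) characters of the fibres
of the bundle `T`. -/
def dia {H : Type u} {U : Type v} {X : Type w} (A : Assumption51 H U X)
    (γ : H) (χ : U → Circle) : U → Circle := fun t => χ (A.rho γ t)

end Assumption51

namespace AbGroupBundle

variable {T : Type u} {X : Type v} (B : AbGroupBundle T X)

lemma bmul_e (t : T) : B.bmul t (B.e (B.p t)) = t := by
  rw [B.bmul_comm _ _ (B.p_e (B.p t)).symm, B.e_bmul]

lemma bmul_binv (t : T) : B.bmul t (B.binv t) = B.e (B.p t) := by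
  rw [B.bmul_comm _ _ (B.p_binv t).symm, B.binv_bmul]

/-- Cancellation in a fibre: `b⁻¹ a = e → a = b`. -/
lemma cancel {a b : T} (hab : B.p a = B.p b)
    (h : B.bmul (B.binv b) a = B.e (B.p b)) : a = b := by
  have h1 : B.p (B.binv b) = B.p a := (B.p_binv b).trans hab.symm
  calc a = B.bmul (B.e (B.p a)) a := (B.e_bmul a).symm
    _ = B.bmul (B.bmul b (B.binv b)) a := by rw [B.bmul_binv, hab]
    _ = B.bmul b (B.bmul (B.binv b) a) := B.bmul_assoc _ _ _ (B.p_binv b).symm h1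
    _ = B.bmul b (B.e (B.p b)) := by rw [h]
    _ = b := B.bmul_e b

end AbGroupBundle

namespace Assumption51

variable {H : Type u} {U : Type v} {X : Type w} (A : Assumption51 H U X)

lemma pr_def (γ : H) : A.pr γ = A.bund.p (A.gpd.r γ) := rfl
lemma ps_def (γ : H) : A.ps γ = A.bund.p (A.gpd.s γ) := rfl

/-- The right action is cancellative (freeness). -/
lemma actR_cancel {η : H} {a b : U} (ha : A.bund.p a = A.ps η) (hb : A.bund.p b = A.ps η)
    (h : A.actR η a = A.actR η b) : a = b := by
  have hib : A.bund.p (A.bund.binv b) = A.bund.p b := A.bund.p_binv b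
  have key : A.actR η (A.bund.bmul a (A.bund.binv b)) = η := by
    calc A.actR η (A.bund.bmul a (A.bund.binv b))
        = A.actR (A.actR η a) (A.bund.binv b) :=
          A.actR_mul η a _ ha (hib.trans (hb.trans ha.symm))
      _ = A.actR (A.actR η b) (A.bund.binv b) := by rw [h]
      _ = A.actR η (A.bund.bmul b (A.bund.binv b)) := (A.actR_mul η b _ hb hib).symm
      _ = A.actR η (A.bund.e (A.bund.p (A.gpd.s η))) := by rw [A.bund.bmul_binv, hb]; rfl
      _ = η := A.actR_id η
  have hp : A.bund.p (A.bund.bmul a (A.bund.binv b)) = A.ps η :=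
    (A.bund.p_bmul a _ (((hib.trans hb).trans ha.symm)).symm).trans (hib.trans hb)
  have hfree : A.bund.bmul a (A.bund.binv b) = A.bund.e (A.bund.p (A.gpd.s η)) :=
    A.actR_free η _ hp key
  refine A.bund.cancel (ha.trans hb.symm) ?_
  rw [A.bund.bmul_comm a _ (ha.trans (hib.trans hb).symm)] at hfree
  rw [hfree, hb]; rfl

/-- The left action is cancellative (freeness). -/
lemma actL_cancel {η : H} {a b : U} (ha : A.bund.p a = A.pr η) (hb : A.bund.p b = A.pr η)
    (h : A.actL a η = A.actL b η) : a = b := by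
  have hib : A.bund.p (A.bund.binv b) = A.bund.p b := A.bund.p_binv b
  have key : A.actL (A.bund.bmul (A.bund.binv b) a) η = η := by
    calc A.actL (A.bund.bmul (A.bund.binv b) a) η
        = A.actL (A.bund.binv b) (A.actL a η) :=
          A.actL_mul _ a η (hib.trans (hb.trans ha.symm)) ha
      _ = A.actL (A.bund.binv b) (A.actL b η) := by rw [h]
      _ = A.actL (A.bund.bmul (A.bund.binv b) b) η := (A.actL_mul _ b η hib hb).symm
      _ = A.actL (A.bund.e (A.bund.p (A.gpd.r η))) η := by rw [A.bund.binv_bmul, hb]; rfl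
      _ = η := A.actL_id η
  have hp : A.bund.p (A.bund.bmul (A.bund.binv b) a) = A.pr η :=
    (A.bund.p_bmul _ a (hib.trans (hb.trans ha.symm))).trans ha
  have hfree := A.actL_free _ η hp key
  refine A.bund.cancel (ha.trans hb.symm) ?_
  rw [hfree, hb]; rfl

/-- Uniqueness characterization of `ρ_η(τ)`. -/
lemma rho_unique {η : H} {τ t' : U} (hτ : A.bund.p τ = A.pr η) (ht' : A.bund.p t' = A.ps η)
    (h : A.actL τ η = A.actR η t') : t' = A.rho η τ :=
  A.actR_cancel ht' (A.rho_p η τ hτ) (h.symm.trans (A.spec_b η τ hτ))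

/-- `λ_η ∘ ρ_η = id`. -/
lemma lam_rho {η : H} {t : U} (ht : A.bund.p t = A.pr η) :
    A.lam η (A.rho η t) = t := by
  have hρ : A.bund.p (A.rho η t) = A.ps η := A.rho_p η t ht
  refine A.actL_cancel (A.lam_p η _ hρ) ht ?_
  rw [← A.spec_a η _ hρ, ← A.spec_b η t ht]

/-- `p_r(γ◀t) = p_r(γ)`. -/
lemma pr_actR {γ : H} {t : U} (ht : A.bund.p t = A.ps γ) :
    A.pr (A.actR γ t) = A.pr γ := by
  rw [A.spec_a γ t ht, pr_def, A.pr_actL _ γ (A.lam_p γ t ht), A.lam_p γ t ht]; rfl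

/-- `p_s(γ◀t) = p_s(γ)`. -/
lemma ps_actR' {γ : H} {t : U} (ht : A.bund.p t = A.ps γ) :
    A.ps (A.actR γ t) = A.ps γ := (A.ps_actR γ t ht).trans ht

/-- Key step of Lemma 5.8: `ρ_{γ◀t} = ρ_γ`. -/
lemma rho_actR {γ : H} {t τ : U} (ht : A.bund.p t = A.ps γ) (hτ : A.bund.p τ = A.pr γ) :
    A.rho (A.actR γ t) τ = A.rho γ τ := by
  have hρ : A.bund.p (A.rho γ τ) = A.ps γ := A.rho_p γ τ hτ
  refine (A.rho_unique (hτ.trans (A.pr_actR ht).symm)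
    (hρ.trans (A.ps_actR' ht).symm) ?_).symm
  calc A.actL τ (A.actR γ t)
      = A.actR (A.actL τ γ) t := (A.act_comm τ γ t hτ ht).symm
    _ = A.actR (A.actR γ (A.rho γ τ)) t := by rw [← A.spec_b γ τ hτ]
    _ = A.actR γ (A.bund.bmul (A.rho γ τ) t) :=
        (A.actR_mul γ _ t hρ (ht.trans hρ.symm)).symm
    _ = A.actR γ (A.bund.bmul t (A.rho γ τ)) := by
        rw [A.bund.bmul_comm _ t (hρ.trans ht.symm)]
    _ = A.actR (A.actR γ t) (A.rho γ τ) := A.actR_mul γ t _ ht (hρ.trans ht.symm)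

/-- `ρ_γ` is a homomorphism of fibres. -/
lemma rho_bmul {γ : H} {τ τ' : U} (hτ : A.bund.p τ = A.pr γ) (hτ' : A.bund.p τ' = A.pr γ) :
    A.rho γ (A.bund.bmul τ τ') = A.bund.bmul (A.rho γ τ) (A.rho γ τ') := by
  have hρ : A.bund.p (A.rho γ τ) = A.ps γ := A.rho_p γ τ hτ
  have hρ' : A.bund.p (A.rho γ τ') = A.ps γ := A.rho_p γ τ' hτ'
  refine (A.rho_unique ((A.bund.p_bmul τ τ' (hτ.trans hτ'.symm)).trans hτ')
    ((A.bund.p_bmul _ _ (hρ.trans hρ'.symm)).trans hρ') ?_).symm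
  calc A.actL (A.bund.bmul τ τ') γ
      = A.actL τ (A.actL τ' γ) := A.actL_mul τ τ' γ (hτ.trans hτ'.symm) hτ'
    _ = A.actL τ (A.actR γ (A.rho γ τ')) := by rw [← A.spec_b γ τ' hτ']
    _ = A.actR (A.actL τ γ) (A.rho γ τ') := (A.act_comm τ γ _ hτ hρ').symm
    _ = A.actR (A.actR γ (A.rho γ τ)) (A.rho γ τ') := by rw [← A.spec_b γ τ hτ]
    _ = A.actR γ (A.bund.bmul (A.rho γ τ) (A.rho γ τ')) :=
        (A.actR_mul γ _ _ hρ (hρ'.trans hρ.symm)).symm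

/-- `ρ_{γη} = ρ_η ∘ ρ_γ`. -/
lemma rho_mul {γ η : H} (hc : A.gpd.s γ = A.gpd.r η) {τ : U} (hτ : A.bund.p τ = A.pr γ) :
    A.rho (A.gpd.mul γ η) τ = A.rho η (A.rho γ τ) := by
  have hpc : A.ps γ = A.pr η := congrArg A.bund.p hc
  have hρ : A.bund.p (A.rho γ τ) = A.pr η := (A.rho_p γ τ hτ).trans hpc
  have hρρ : A.bund.p (A.rho η (A.rho γ τ)) = A.ps η := A.rho_p η _ hρ
  have hprm : A.pr (A.gpd.mul γ η) = A.pr γ := congrArg A.bund.p (A.gpd.r_mul γ η hc)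
  have hpsm : A.ps (A.gpd.mul γ η) = A.ps η := congrArg A.bund.p (A.gpd.s_mul γ η hc)
  refine (A.rho_unique (hτ.trans hprm.symm) (hρρ.trans hpsm.symm) ?_).symm
  calc A.actL τ (A.gpd.mul γ η)
      = A.gpd.mul (A.actL τ γ) (A.actL (A.rho γ τ) η) := A.spec_d γ η τ hc hτ
    _ = A.gpd.mul (A.actR γ (A.rho γ τ)) (A.actR η (A.rho η (A.rho γ τ))) := by
        rw [← A.spec_b γ τ hτ, ← A.spec_b η _ hρ]
    _ = A.gpd.mul (A.actR γ (A.lam η (A.rho η (A.rho γ τ)))) (A.actR η (A.rho η (A.rho γ τ))) := by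
        rw [A.lam_rho hρ]
    _ = A.actR (A.gpd.mul γ η) (A.rho η (A.rho γ τ)) := (A.spec_c γ η _ hc hρρ).symm

/-- `ρ_{u} = id` for units. -/
lemma rho_unit {x τ : U} (hτ : A.bund.p τ = A.bund.p x) :
    A.rho (A.gpd.unit x) τ = τ := by
  have hr : A.pr (A.gpd.unit x) = A.bund.p x := congrArg A.bund.p (A.gpd.r_unit x)
  have hs : A.ps (A.gpd.unit x) = A.bund.p x := congrArg A.bund.p (A.gpd.s_unit x)
  exact (A.rho_unique (hτ.trans hr.symm) (hτ.trans hs.symm) (A.unit_act x τ hτ)).symm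

end Assumption51

/-- Lemma 5.8 (with the key step `ρ_{γ◀t} = ρ_γ` of its proof): under Assumption 5.1,
(i) `ρ_{γ◀t} = ρ_γ`, in particular `p_r(γ◀t) = p_r(γ)`;
(ii) `γ ⋄ χ := χ ∘ ρ_γ` sends characters of `T_{p_s(γ)}` to characters of `T_{p_r(γ)}` and
defines an action of `H` on `T̂`: `(γη) ⋄ χ = γ ⋄ (η ⋄ χ)` for composable pairs and units act
trivially;
(iii) `(γ◀t) ⋄ χ = γ ⋄ χ`, so `⋄` descends to an action of `H/T` on `T̂`;
(iv) `γ ⋄ (χ₁·χ₂) = (γ ⋄ χ₁)·(γ ⋄ χ₂)`. -/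
theorem lemma58 {H : Type u} {U : Type v} {X : Type w} (A : Assumption51 H U X) :
    -- (i) `ρ_{γ◀t} = ρ_γ`, in particular `p_r(γ◀t) = p_r(γ)`
    (∀ γ t, A.bund.p t = A.ps γ →
        A.pr (A.actR γ t) = A.pr γ ∧
        ∀ τ, A.bund.p τ = A.pr γ → A.rho (A.actR γ t) τ = A.rho γ τ) ∧
    -- (ii) `γ ⋄ χ` is a character of `T_{p_r(γ)}` whenever `χ` is one of `T_{p_s(γ)}` ...
    (∀ (γ : H) (χ : U → Circle),
        (∀ t t', A.bund.p t = A.ps γ → A.bund.p t' = A.ps γ →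
          χ (A.bund.bmul t t') = χ t * χ t') →
        ∀ τ τ', A.bund.p τ = A.pr γ → A.bund.p τ' = A.pr γ →
          A.dia γ χ (A.bund.bmul τ τ') = A.dia γ χ τ * A.dia γ χ τ') ∧
    -- ... and `⋄` is an action: `(γη) ⋄ χ = γ ⋄ (η ⋄ χ)`, and units act trivially
    (∀ γ η, A.gpd.s γ = A.gpd.r η → ∀ (χ : U → Circle) τ, A.bund.p τ = A.pr γ →
        A.dia (A.gpd.mul γ η) χ τ = A.dia γ (A.dia η χ) τ) ∧
    (∀ (x : U) (χ : U → Circle) (τ : U), A.bund.p τ = A.bund.p x →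
        A.dia (A.gpd.unit x) χ τ = χ τ) ∧
    -- (iii) `(γ◀t) ⋄ χ = γ ⋄ χ`, so `⋄` descends to `H/T`
    (∀ γ t (χ : U → Circle) τ, A.bund.p t = A.ps γ → A.bund.p τ = A.pr γ →
        A.dia (A.actR γ t) χ τ = A.dia γ χ τ) ∧
    -- (iv) `γ ⋄ (χ₁·χ₂) = (γ ⋄ χ₁)·(γ ⋄ χ₂)`
    (∀ γ (χ₁ χ₂ : U → Circle) τ, A.bund.p τ = A.pr γ →
        A.dia γ (fun t => χ₁ t * χ₂ t) τ = A.dia γ χ₁ τ * A.dia γ χ₂ τ) := by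
  refine ⟨fun γ t ht => ⟨A.pr_actR ht, fun τ hτ => A.rho_actR ht hτ⟩,
    fun γ χ hχ τ τ' hτ hτ' => ?_, fun γ η hc χ τ hτ => ?_, fun x χ τ hτ => ?_,
    fun γ t χ τ ht hτ => ?_, fun γ χ₁ χ₂ τ hτ => rfl⟩
  · show χ (A.rho γ (A.bund.bmul τ τ')) = χ (A.rho γ τ) * χ (A.rho γ τ')
    rw [A.rho_bmul hτ hτ']
    exact hχ _ _ (A.rho_p γ τ hτ) (A.rho_p γ τ' hτ')
  · show χ (A.rho (A.gpd.mul γ η) τ) = χ (A.rho η (A.rho γ τ))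
    rw [A.rho_mul hc hτ]
  · show χ (A.rho (A.gpd.unit x) τ) = χ τ
    rw [A.rho_unit hτ]
  · show χ (A.rho (A.actR γ t) τ) = χ (A.rho γ τ)
    rw [A.rho_actR ht hτ]
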